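/- For every n ≥ 1, t ≥ 1 and every voter matrix V : Fin n → Fin t → Bool in which every column has majority Y, there exists a proposal p that is supported by a majority of voters and has at least ⌈(t+1)/2⌉ entries equal to true. (That is, md_t ≥ ⌈(t+1)/2⌉: one can always find a majority-supported proposal agreeing with the majority opinion on at least ⌈(t+1)/2⌉ topics.) -/

import Mathlib

open Finset
open scoped symmDiff

/-- Number of topics on which opinion vector `v` agrees with proposal `p`. -/
def agreeCount {t : ℕ} (v p : Fin t → Bool) : ℕ :=
  (univ.filter (fun j => v j = p j)).card

/-- Voter `v` supports proposal `p`: agreement on at least half the topics,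
    i.e. `2 * |{j : v j = p j}| ≥ t`. -/
def Supports {t : ℕ} (v p : Fin t → Bool) : Prop :=
  t ≤ 2 * agreeCount v p

instance {t : ℕ} (v p : Fin t → Bool) : Decidable (Supports v p) :=
  Nat.decLe _ _

/-- Proposal `p` is supported by a majority of the voters of `V`:
    `2 * |{i : voter i supports p}| ≥ n`. -/
def MajSupported {n t : ℕ} (V : Fin n → Fin t → Bool) (p : Fin t → Bool) : Prop :=
  n ≤ 2 * (univ.filter (fun i => Supports (V i) p)).card

/-- Column `j` of `V` has majority Y: `2 * |{i : V i j = true}| ≥ n`. -/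
def ColMajority {n t : ℕ} (V : Fin n → Fin t → Bool) (j : Fin t) : Prop :=
  n ≤ 2 * (univ.filter (fun i => V i j = true)).card

/-- Number of true entries of a vector. -/
def trueCount {t : ℕ} (p : Fin t → Bool) : ℕ :=
  (univ.filter (fun j => p j = true)).card

/-- Number of matching opinions between the voters of `V` and proposal `p`. -/
def matchCount {n t : ℕ} (V : Fin n → Fin t → Bool) (p : Fin t → Bool) : ℕ :=
  (univ.filter (fun ij : Fin n × Fin t => V ij.1 ij.2 = p ij.2)).card

namespace MDAux

variable {α : Type*} [DecidableEq α]

lemma sd_insert_right {T W : Finset α} {j : α} (hT : j ∉ T) (hW : j ∉ W) :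
    T ∆ insert j W = insert j (T ∆ W) := by
  ext x
  by_cases hx : x = j
  · subst hx; simp [Finset.mem_symmDiff, hT, hW]
  · simp only [Finset.mem_symmDiff, Finset.mem_insert, hx, false_or]

lemma sd_insert_left {T W : Finset α} {j : α} (hT : j ∉ T) (hW : j ∉ W) :
    insert j T ∆ W = insert j (T ∆ W) := by
  rw [symmDiff_comm, sd_insert_right hW hT, symmDiff_comm]

lemma sd_insert_both {T W : Finset α} {j : α} (hT : j ∉ T) (hW : j ∉ W) :
    insert j T ∆ insert j W = T ∆ W := by
  ext x
  by_cases hx : x = j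
  · subst hx; simp [Finset.mem_symmDiff, hT, hW]
  · simp only [Finset.mem_symmDiff, Finset.mem_insert, hx, false_or]

lemma sd_sdiff {U T W : Finset α} (hT : T ⊆ U) (hW : W ⊆ U) :
    T ∆ (U \ W) = U \ (T ∆ W) := by
  ext x
  have hxT : x ∈ T → x ∈ U := fun h => hT h
  have hxW : x ∈ W → x ∈ U := fun h => hW h
  simp only [Finset.mem_symmDiff, Finset.mem_sdiff]
  tauto

lemma sd_subset {U T W : Finset α} (hT : T ⊆ U) (hW : W ⊆ U) :
    T ∆ W ⊆ U := by
  exact Finset.Subset.trans (symmDiff_le_sup (a := T) (b := W)) (Finset.union_subset hT hW)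

lemma sd_compl [Fintype α] (T S : Finset α) : T ∆ Sᶜ = (T ∆ S)ᶜ := by
  ext x
  simp only [Finset.mem_symmDiff, Finset.mem_compl]
  tauto

end MDAux

namespace MDOdd

open MDAux

/-- The weight function for the key identity. -/
def w (m : ℕ) (T W : Finset (Fin (2 * m + 1))) : ℤ :=
  if W.card ≤ m ∧ (T ∆ W).card ≤ m then (2 * m + 1 : ℤ) - 2 * (T ∆ W).card else 0

/-- The per-voter weighted count. -/
def G (m : ℕ) (T : Finset (Fin (2 * m + 1))) : ℤ :=
  ∑ W ∈ (univ : Finset (Fin (2 * m + 1))).powerset, w m T W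

/-- Key step: inserting an element into `T` decreases `G` by `C(2m, m)`. -/
lemma G_delta (m : ℕ) (T : Finset (Fin (2 * m + 1))) (j : Fin (2 * m + 1)) (hj : j ∉ T) :
    G m T = G m (insert j T) + ((2 * m).choose m : ℤ) := by
  classical
  set U : Finset (Fin (2 * m + 1)) := univ.erase j with hUdef
  have hjU : j ∉ U := Finset.notMem_erase j univ
  have hU : insert j U = univ := Finset.insert_erase (Finset.mem_univ j)
  have hTU : T ⊆ U := fun x hx =>
    Finset.mem_erase.2 ⟨fun h => hj (h ▸ hx), Finset.mem_univ x⟩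
  have hUcard : U.card = 2 * m := by
    rw [hUdef, Finset.card_erase_of_mem (Finset.mem_univ j)]
    simp
  have expand : ∀ T' : Finset (Fin (2 * m + 1)), G m T' =
      ∑ W ∈ U.powerset, (w m T' W + w m T' (insert j W)) := by
    intro T'
    rw [G, ← hU, Finset.sum_powerset_insert hjU, Finset.sum_add_distrib]
  rw [expand, expand, ← sub_eq_iff_eq_add', ← Finset.sum_sub_distrib]
  have key : ∀ W ∈ U.powerset,
      (w m T W + w m T (insert j W)) - (w m (insert j T) W + w m (insert j T) (insert j W))
      = if W.card = m then
          (if (T ∆ W).card + 1 ≤ m then (2 : ℤ) else if (T ∆ W).card ≤ m then 1 else 0)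
        else 0 := by
    intro W hW
    have hWU : W ⊆ U := Finset.mem_powerset.1 hW
    have hjW : j ∉ W := fun h => hjU (hWU h)
    have hjTW : j ∉ T ∆ W := by
      simp [Finset.mem_symmDiff, hj, hjW]
    have e1 : T ∆ insert j W = insert j (T ∆ W) := sd_insert_right hj hjW
    have e2 : insert j T ∆ W = insert j (T ∆ W) := sd_insert_left hj hjW
    have e3 : insert j T ∆ insert j W = T ∆ W := sd_insert_both hj hjW
    rw [w, w, w, w, e1, e2, e3,
        Finset.card_insert_of_notMem hjTW, Finset.card_insert_of_notMem hjW]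
    split_ifs <;> push_cast <;> omega
  rw [Finset.sum_congr rfl key, ← Finset.sum_filter, ← Finset.powersetCard_eq_filter]
  have hmem : ∀ W ∈ U.powersetCard m, W ⊆ U ∧ W.card = m :=
    fun W hW => Finset.mem_powersetCard.1 hW
  have hdcard : ∀ W ∈ U.powersetCard m, (T ∆ (U \ W)).card = 2 * m - (T ∆ W).card := by
    intro W hW
    obtain ⟨hWU, _⟩ := hmem W hW
    rw [sd_sdiff hTU hWU, Finset.card_sdiff_of_subset (sd_subset hTU hWU), hUcard]
  have hdle : ∀ W ∈ U.powersetCard m, (T ∆ W).card ≤ 2 * m := by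
    intro W hW
    obtain ⟨hWU, _⟩ := hmem W hW
    calc (T ∆ W).card ≤ U.card := Finset.card_le_card (sd_subset hTU hWU)
    _ = 2 * m := hUcard
  have main : ∑ W ∈ U.powersetCard m,
      ((if (T ∆ W).card + 1 ≤ m then (2 : ℤ) else if (T ∆ W).card ≤ m then 1 else 0) - 1) = 0 := by
    refine Finset.sum_involution (fun W _ => U \ W) ?_ ?_ ?_ ?_
    · intro W hW
      have h1 := hdcard W hW
      have h2 := hdle W hW
      rw [h1]
      split_ifs <;> omega
    · intro W hW hf heq
      replace heq : U \ W = W := heq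
      obtain ⟨hWU, hWm⟩ := hmem W hW
      have hWe : W = ∅ := by
        have hd : Disjoint (U \ W) W := Finset.sdiff_disjoint
        rw [heq] at hd
        simpa using disjoint_self.1 hd
      have hUe : U = ∅ := by
        rw [hWe] at heq
        simpa using heq
      have hTe : T = ∅ := by
        rw [hUe] at hTU
        exact Finset.subset_empty.1 hTU
      have hm0 : m = 0 := by rw [← hWm, hWe, Finset.card_empty]
      apply hf
      rw [hWe, hTe, hm0]
      simp
    · intro W hW
      obtain ⟨hWU, hWm⟩ := hmem W hW
      refine Finset.mem_powersetCard.2 ⟨Finset.sdiff_subset, ?_⟩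
      rw [Finset.card_sdiff_of_subset hWU, hUcard, hWm]
      omega
    · intro W hW
      obtain ⟨hWU, _⟩ := hmem W hW
      exact Finset.sdiff_sdiff_eq_self hWU
  have split : ∑ W ∈ U.powersetCard m,
      (if (T ∆ W).card + 1 ≤ m then (2 : ℤ) else if (T ∆ W).card ≤ m then 1 else 0)
      = ∑ W ∈ U.powersetCard m,
        (((if (T ∆ W).card + 1 ≤ m then (2 : ℤ) else if (T ∆ W).card ≤ m then 1 else 0) - 1) + 1) := by
    refine Finset.sum_congr rfl fun W _ => ?_
    ring
  rw [split, Finset.sum_add_distrib, main, zero_add, Finset.sum_const,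
      Finset.card_powersetCard, hUcard]
  simp

lemma G_univ (m : ℕ) : G m (univ : Finset (Fin (2 * m + 1))) = 0 := by
  refine Finset.sum_eq_zero fun W hW => ?_
  have h1 : (univ : Finset (Fin (2 * m + 1))) ∆ W = Wᶜ := by
    rw [← Finset.top_eq_univ, top_symmDiff, hnot_eq_compl]
  have h2 : (Wᶜ).card = 2 * m + 1 - W.card := by
    rw [Finset.card_compl, Fintype.card_fin]
  have h3 : W.card ≤ 2 * m + 1 := by simpa using Finset.card_le_univ W
  rw [w, if_neg]
  rintro ⟨hc1, hc2⟩
  rw [h1, h2] at hc2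
  omega

/-- The key identity. -/
lemma G_eq (m : ℕ) (T : Finset (Fin (2 * m + 1))) :
    G m T = ((2 * m + 1 : ℤ) - T.card) * ((2 * m).choose m : ℤ) := by
  have key : ∀ K : Finset (Fin (2 * m + 1)),
      G m Kᶜ = (K.card : ℤ) * ((2 * m).choose m : ℤ) := by
    intro K
    induction K using Finset.induction_on with
    | empty => simpa using G_univ m
    | @insert j K hj ih =>
      have hjK : j ∈ Kᶜ := Finset.mem_compl.2 hj
      have h1 : (insert j K)ᶜ = Kᶜ.erase j := Finset.compl_insert
      have h2 : j ∉ Kᶜ.erase j := Finset.notMem_erase j Kᶜ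
      have h3 : insert j (Kᶜ.erase j) = Kᶜ := Finset.insert_erase hjK
      have := G_delta m (Kᶜ.erase j) j h2
      rw [h3, ih] at this
      rw [h1, this, Finset.card_insert_of_notMem hj]
      push_cast
      ring
  have h := key Tᶜ
  rw [compl_compl] at h
  rw [h, Finset.card_compl, Fintype.card_fin]
  have : T.card ≤ 2 * m + 1 := by simpa using Finset.card_le_univ T
  push_cast [this]
  ring

/-- `G` in the S-form: the sum of `t - 2|S|` over supported small proposals. -/
lemma G_sform (m : ℕ) (T : Finset (Fin (2 * m + 1))) :
    G m T = ∑ S ∈ (univ : Finset (Fin (2 * m + 1))).powerset,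
      (if S.card ≤ m ∧ (T ∆ S).card ≤ m then (2 * m + 1 : ℤ) - 2 * S.card else 0) := by
  rw [G, Finset.powerset_univ]
  refine (Fintype.sum_equiv ⟨fun S => T ∆ S, fun W => T ∆ W,
     fun S => symmDiff_symmDiff_cancel_left T S,
     fun W => symmDiff_symmDiff_cancel_left T W⟩ _ _ fun S => ?_).symm
  show (if S.card ≤ m ∧ (T ∆ S).card ≤ m then (2 * m + 1 : ℤ) - 2 * S.card else 0)
      = w m T (T ∆ S)
  rw [w, symmDiff_symmDiff_cancel_left]
  by_cases h1 : S.card ≤ m <;> by_cases h2 : (T ∆ S).card ≤ m <;>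
    simp [h1, h2]

end MDOdd

namespace MDMain

open MDAux MDOdd

lemma odd_case (n m : ℕ) (hn : 1 ≤ n) (V : Fin n → Fin (2 * m + 1) → Bool)
    (hmaj : ∀ j, ColMajority V j) :
    ∃ p : Fin (2 * m + 1) → Bool, MajSupported V p ∧ m + 1 ≤ trueCount p := by
  classical
  by_contra hcon
  push_neg at hcon
  set T : Fin n → Finset (Fin (2 * m + 1)) :=
    fun i => univ.filter (fun j => V i j = true) with hTdef
  -- the filter of a Finset-indicator proposal
  have hfil : ∀ S : Finset (Fin (2 * m + 1)),
      univ.filter (fun j => (decide (j ∈ S)) = true) = S := by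
    intro S; ext x; simp
  -- agreement + symmetric difference = t
  have hagree : ∀ (i : Fin n) (S : Finset (Fin (2 * m + 1))),
      agreeCount (V i) (fun j => decide (j ∈ S)) + ((T i) ∆ S).card = 2 * m + 1 := by
    intro i S
    have hsd : (T i) ∆ S = univ.filter (fun j => ¬ (V i j = decide (j ∈ S))) := by
      ext x
      simp only [hTdef, Finset.mem_symmDiff, Finset.mem_filter, Finset.mem_univ, true_and]
      cases hv : V i x <;> by_cases hx : x ∈ S <;> simp [hx]
    rw [agreeCount, hsd, Finset.card_filter_add_card_filter_not]
    simp
  -- support characterization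
  have hsupp : ∀ (i : Fin n) (S : Finset (Fin (2 * m + 1))),
      Supports (V i) (fun j => decide (j ∈ S)) ↔ (T i ∆ S).card ≤ m := by
    intro i S
    have h := hagree i S
    rw [Supports]
    omega
  -- trueCount of an indicator proposal
  have htc : ∀ S : Finset (Fin (2 * m + 1)),
      trueCount (fun j => decide (j ∈ S)) = S.card := by
    intro S
    rw [trueCount, hfil]
  -- majority for small S via the complement pairing
  have hbig : ∀ S : Finset (Fin (2 * m + 1)), S.card ≤ m →
      n + 1 ≤ 2 * (univ.filter (fun i => (T i ∆ S).card ≤ m)).card := by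
    intro S hS
    have hRcard : (Sᶜ).card = 2 * m + 1 - S.card := by
      rw [Finset.card_compl, Fintype.card_fin]
    have h1 : ¬ MajSupported V (fun j => decide (j ∈ Sᶜ)) := by
      intro hms
      have := hcon _ hms
      rw [htc, hRcard] at this
      omega
    rw [MajSupported] at h1
    push_neg at h1
    have h2 : univ.filter (fun i => Supports (V i) (fun j => decide (j ∈ Sᶜ)))
        = univ.filter (fun i => ¬ ((T i ∆ S).card ≤ m)) := by
      refine Finset.filter_congr fun i _ => ?_
      rw [hsupp i Sᶜ, sd_compl]
      have hcc : ((T i ∆ S)ᶜ).card = 2 * m + 1 - (T i ∆ S).card := by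
        rw [Finset.card_compl, Fintype.card_fin]
      have hle : (T i ∆ S).card ≤ 2 * m + 1 := by
        simpa using Finset.card_le_univ (T i ∆ S)
      constructor
      · intro h; omega
      · intro h; omega
    rw [h2] at h1
    have h4 := Finset.card_filter_add_card_filter_not
      (s := (univ : Finset (Fin n))) (p := fun i => (T i ∆ S).card ≤ m)
    simp only [Finset.card_univ, Fintype.card_fin] at h4
    omega
  -- column double counting
  have hcols : (2 * m + 1) * n ≤ 2 * ∑ i, (T i).card := by
    have hswap : ∑ i, (T i).card
        = ∑ j, (univ.filter (fun i => V i j = true)).card := by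
      calc ∑ i, (T i).card
          = ∑ i, ∑ j, (if V i j = true then 1 else 0) :=
            Finset.sum_congr rfl fun i _ => Finset.card_filter _ _
        _ = ∑ j, ∑ i, (if V i j = true then 1 else 0) := Finset.sum_comm
        _ = ∑ j, (univ.filter (fun i => V i j = true)).card :=
            Finset.sum_congr rfl fun j _ => (Finset.card_filter _ _).symm
    rw [hswap, Finset.mul_sum]
    calc (2 * m + 1) * n = ∑ _j : Fin (2 * m + 1), n := by
          rw [Finset.sum_const, Finset.card_univ, Fintype.card_fin, smul_eq_mul]
      _ ≤ ∑ j, 2 * (univ.filter (fun i => V i j = true)).card :=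
          Finset.sum_le_sum fun j _ => hmaj j
  -- the grand sum
  set C : ℤ := ((2 * m).choose m : ℤ) with hCdef
  have hC : 1 ≤ C := by
    have h := Nat.choose_pos (show m ≤ 2 * m by omega)
    rw [hCdef]
    exact_mod_cast h
  set Z : ℤ := ∑ i, G m (T i) with hZdef
  -- upper bound via the identity
  have hup : 2 * Z ≤ (2 * m + 1 : ℤ) * n * C := by
    have h1 : Z = ((2 * m + 1 : ℤ) * n - ∑ i, ((T i).card : ℤ)) * C := by
      rw [hZdef]
      rw [Finset.sum_congr rfl fun i (_ : i ∈ univ) => G_eq m (T i)]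
      rw [← Finset.sum_mul, Finset.sum_sub_distrib]
      congr 1
      rw [Finset.sum_const, Finset.card_univ, Fintype.card_fin]
      push_cast
      ring
    have h2 : (2 * m + 1 : ℤ) * n ≤ 2 * ∑ i, ((T i).card : ℤ) := by
      have := hcols
      have hcast : ((∑ i, (T i).card : ℕ) : ℤ) = ∑ i, ((T i).card : ℤ) := by
        push_cast; rfl
      exact_mod_cast this
    have h3 : 2 * Z = (2 * ((2 * m + 1 : ℤ) * n) - 2 * ∑ i, ((T i).card : ℤ)) * C := by
      rw [h1]; ring
    rw [h3]
    have h4 : 2 * ((2 * m + 1 : ℤ) * n) - 2 * ∑ i, ((T i).card : ℤ) ≤ (2 * m + 1 : ℤ) * n := by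
      omega
    exact mul_le_mul_of_nonneg_right h4 (by omega)
  -- lower bound via strong majorities
  have hlow : ((n : ℤ) + 1) * ((2 * m + 1 : ℤ) * C) ≤ 2 * Z := by
    have hsw : Z = ∑ S ∈ (univ : Finset (Fin (2 * m + 1))).powerset,
        ∑ i, (if S.card ≤ m ∧ (T i ∆ S).card ≤ m then (2 * m + 1 : ℤ) - 2 * S.card else 0) := by
      rw [hZdef, Finset.sum_congr rfl fun i (_ : i ∈ univ) => G_sform m (T i)]
      exact Finset.sum_comm
    have hper : ∀ S : Finset (Fin (2 * m + 1)),
        ∑ i, (if S.card ≤ m ∧ (T i ∆ S).card ≤ m then (2 * m + 1 : ℤ) - 2 * S.card else 0)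
        = if S.card ≤ m then ((2 * m + 1 : ℤ) - 2 * S.card) *
            ((univ.filter (fun i => (T i ∆ S).card ≤ m)).card : ℤ) else 0 := by
      intro S
      by_cases hS : S.card ≤ m
      · simp only [hS, true_and, if_true]
        rw [Finset.sum_ite, Finset.sum_const, Finset.sum_const_zero, add_zero,

            nsmul_eq_mul]
        ring
      · simp [hS]
    have hZform : Z = ∑ S ∈ (univ : Finset (Fin (2 * m + 1))).powerset,
        (if S.card ≤ m then ((2 * m + 1 : ℤ) - 2 * S.card) *
            ((univ.filter (fun i => (T i ∆ S).card ≤ m)).card : ℤ) else 0) := by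
      rw [hsw]
      exact Finset.sum_congr rfl fun S _ => hper S
    have hZ2 : 2 * Z = ∑ S ∈ (univ : Finset (Fin (2 * m + 1))).powerset,
        (if S.card ≤ m then ((2 * m + 1 : ℤ) - 2 * S.card) *
            (2 * ((univ.filter (fun i => (T i ∆ S).card ≤ m)).card : ℤ)) else 0) := by
      rw [hZform, Finset.mul_sum]
      refine Finset.sum_congr rfl fun S _ => ?_
      split_ifs <;> ring
    have hGe : G m (∅ : Finset (Fin (2 * m + 1))) = (2 * m + 1 : ℤ) * C := by
      rw [G_eq m ∅]
      simp [hCdef]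
    have hGe2 : ∑ S ∈ (univ : Finset (Fin (2 * m + 1))).powerset,
        (if S.card ≤ m then (2 * m + 1 : ℤ) - 2 * S.card else 0) = (2 * m + 1 : ℤ) * C := by
      rw [← hGe, G_sform m ∅]
      refine Finset.sum_congr rfl fun S _ => ?_
      have hb : (∅ : Finset (Fin (2 * m + 1))) ∆ S = S := by
        ext x; simp [Finset.mem_symmDiff]
      rw [hb]
      simp
    rw [hZ2, ← hGe2, Finset.mul_sum]
    refine Finset.sum_le_sum fun S _ => ?_
    by_cases hS : S.card ≤ m
    · simp only [hS, if_true]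
      have hw1 : (1 : ℤ) ≤ (2 * m + 1 : ℤ) - 2 * S.card := by
        have : (S.card : ℤ) ≤ m := by exact_mod_cast hS
        omega
      have hcnt : ((n : ℤ) + 1) ≤ 2 * ((univ.filter (fun i => (T i ∆ S).card ≤ m)).card : ℤ) := by
        have := hbig S hS
        exact_mod_cast this
      calc ((n : ℤ) + 1) * ((2 * m + 1 : ℤ) - 2 * S.card)
          = ((2 * m + 1 : ℤ) - 2 * S.card) * ((n : ℤ) + 1) := by ring
        _ ≤ ((2 * m + 1 : ℤ) - 2 * S.card) *
            (2 * ((univ.filter (fun i => (T i ∆ S).card ≤ m)).card : ℤ)) := by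
            apply mul_le_mul_of_nonneg_left hcnt
            omega
    · simp [hS]
  -- contradiction
  have hKC : (1 : ℤ) ≤ (2 * m + 1 : ℤ) * C := by
    have : (1 : ℤ) ≤ (2 * m + 1 : ℤ) := by omega
    nlinarith
  nlinarith [hup, hlow, hKC]

lemma even_case (n m : ℕ) (hn : 1 ≤ n) (V : Fin n → Fin (2 * m + 2) → Bool)
    (hmaj : ∀ j, ColMajority V j) :
    ∃ p : Fin (2 * m + 2) → Bool, MajSupported V p ∧ m + 2 ≤ trueCount p := by
  classical
  set V' : Fin n → Fin (2 * m + 1) → Bool := fun i j => V i j.castSucc with hV'def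
  have hmaj' : ∀ j, ColMajority V' j := fun j => hmaj j.castSucc
  obtain ⟨p', hp'maj, hp'cnt⟩ := odd_case n m hn V' hmaj'
  set p : Fin (2 * m + 2) → Bool := Fin.lastCases true p' with hpdef
  have hplast : p (Fin.last (2 * m + 1)) = true := Fin.lastCases_last
  have hpcast : ∀ j : Fin (2 * m + 1), p j.castSucc = p' j := fun j => Fin.lastCases_castSucc j
  refine ⟨p, ?_, ?_⟩
  · -- majority support carries over
    have hsupp : ∀ i, Supports (V' i) p' → Supports (V i) p := by
      intro i hs
      rw [Supports] at hs ⊢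
      have hag : agreeCount (V i) p =
          agreeCount (V' i) p' + (if V i (Fin.last (2 * m + 1)) = p (Fin.last (2 * m + 1)) then 1 else 0) := by
        rw [agreeCount, agreeCount, Finset.card_filter, Finset.card_filter,
            Fin.sum_univ_castSucc]
        congr 1
        refine Finset.sum_congr rfl fun j _ => ?_
        rw [hpcast j]
      rw [hag]
      have : 2 * agreeCount (V' i) p' ≥ 2 * m + 1 := hs
      have heven : 2 * agreeCount (V' i) p' ≠ 2 * m + 1 := by omega
      split_ifs <;> omega
    have hsub : univ.filter (fun i => Supports (V' i) p')
        ⊆ univ.filter (fun i => Supports (V i) p) := by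
      intro i hi
      rw [Finset.mem_filter] at hi ⊢
      exact ⟨hi.1, hsupp i hi.2⟩
    have := Finset.card_le_card hsub
    rw [MajSupported]
    rw [MajSupported] at hp'maj
    omega
  · -- trueCount increases by one
    have htc : trueCount p = trueCount p' + 1 := by
      rw [trueCount, trueCount, Finset.card_filter, Finset.card_filter,
          Fin.sum_univ_castSucc, hplast]
      simp only [if_pos rfl]
      congr 1
      refine Finset.sum_congr rfl fun j _ => ?_
      rw [hpcast j]
    omega

end MDMain

/-- every voter matrix with all-Y column majorities admits a majority-supported
proposal with at least ⌈(t+1)/2⌉ = (t+2)/2 true entries. -/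
theorem md_lower_bound (n t : ℕ) (hn : 1 ≤ n) (ht : 1 ≤ t)
    (V : Fin n → Fin t → Bool) (hmaj : ∀ j, ColMajority V j) :
    ∃ p : Fin t → Bool, MajSupported V p ∧ (t + 2) / 2 ≤ trueCount p := by
  rcases Nat.even_or_odd t with he | ho
  · obtain ⟨c, hc⟩ := he
    have hc2 : t = 2 * (c - 1) + 2 := by omega
    subst hc2
    obtain ⟨p, hp1, hp2⟩ := MDMain.even_case n (c - 1) hn V hmaj
    exact ⟨p, hp1, by omega⟩
  · obtain ⟨c, hc⟩ := ho
    subst hc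
    obtain ⟨p, hp1, hp2⟩ := MDMain.odd_case n c hn V hmaj
    exact ⟨p, hp1, by omega⟩
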